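/- Let A be an n×n complex matrix with Av = λ₀v for some nonzero vector v, and let r be a vector with rᵀv = 1. Then for any scalar λ₁, the characteristic polynomial of Â = A + (λ₁ − λ₀)·v·rᵀ equals the characteristic polynomial of A multiplied by (λ₁ − x)/(λ₀ − x); equivalently, the eigenvalues of Â (with multiplicity) are those of A except that one occurrence of λ₀ is replaced by λ₁. -/

import Mathlib

open Matrix Polynomial

lemma my_eval_charpoly {n : ℕ} (M : Matrix (Fin n) (Fin n) ℂ) (x : ℂ) :
    (M.charpoly).eval x = (x • (1 : Matrix (Fin n) (Fin n) ℂ) - M).det := by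
  rw [Matrix.charpoly, ← coe_evalRingHom, RingHom.map_det]
  congr 1
  ext i j
  by_cases h : i = j <;>
    simp [Matrix.charmatrix_apply, Matrix.one_apply, h]

/-- Brauer's theorem (characteristic polynomial form): shifting a single
eigenvalue `λ₀` to `λ₁` by the rank-one update `(λ₁ - λ₀) v rᵀ`. -/
theorem brauer_charpoly {n : ℕ} (A : Matrix (Fin n) (Fin n) ℂ)
    (v r : Fin n → ℂ) (lam0 lam1 : ℂ)
    (hv : v ≠ 0) (hAv : A.mulVec v = lam0 • v)
    (hrv : dotProduct r v = 1) :
    (A + (lam1 - lam0) • Matrix.vecMulVec v r).charpoly * (X - C lam0)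
      = A.charpoly * (X - C lam1) := by
  set c := lam1 - lam0 with hc
  apply Polynomial.eq_of_infinite_eval_eq
  have hfin : {x : ℂ | (x • (1 : Matrix (Fin n) (Fin n) ℂ) - A).det = 0}.Finite := by
    have : {x : ℂ | (x • (1 : Matrix (Fin n) (Fin n) ℂ) - A).det = 0}
        = {x : ℂ | IsRoot A.charpoly x} := by
      ext x; simp [IsRoot, my_eval_charpoly]
    rw [this]
    exact Polynomial.finite_setOf_isRoot A.charpoly_monic.ne_zero
  apply Set.Infinite.mono (s := {x : ℂ | (x • (1 : Matrix (Fin n) (Fin n) ℂ) - A).det ≠ 0})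
  swap
  · have := hfin.infinite_compl
    simpa [Set.compl_setOf] using this
  intro x hx
  simp only [Set.mem_setOf_eq] at hx ⊢
  set B := x • (1 : Matrix (Fin n) (Fin n) ℂ) - A with hB
  have hBu : IsUnit B.det := isUnit_iff_ne_zero.mpr hx
  have hBv : B *ᵥ v = (x - lam0) • v := by
    rw [hB, Matrix.sub_mulVec, Matrix.smul_mulVec, Matrix.one_mulVec, hAv, sub_smul]
  have hx0 : x ≠ lam0 := by
    intro h
    apply hx
    rw [← Matrix.exists_mulVec_eq_zero_iff]
    exact ⟨v, hv, by rw [hBv, h, sub_self, zero_smul]⟩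
  have hxl : x - lam0 ≠ 0 := sub_ne_zero.mpr hx0
  have hBinv : B⁻¹ *ᵥ v = (x - lam0)⁻¹ • v := by
    have h1 : B⁻¹ *ᵥ (B *ᵥ v) = v := by
      rw [Matrix.mulVec_mulVec, Matrix.nonsing_inv_mul _ hBu, Matrix.one_mulVec]
    rw [hBv, Matrix.mulVec_smul] at h1
    have h2 : (x - lam0)⁻¹ • ((x - lam0) • (B⁻¹ *ᵥ v)) = (x - lam0)⁻¹ • v := by rw [h1]
    rwa [smul_smul, inv_mul_cancel₀ hxl, one_smul] at h2
  have key : x • (1 : Matrix (Fin n) (Fin n) ℂ) - (A + c • Matrix.vecMulVec v r)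
      = B + replicateCol (Fin 1) ((-c) • v) * replicateRow (Fin 1) r := by
    erw [← Matrix.vecMulVec_eq (Fin 1) ((-c) • v) r]
    ext i j
    simp [hB, Matrix.vecMulVec_apply, Matrix.sub_apply, Matrix.add_apply]
    ring
  have hdet : (x • (1 : Matrix (Fin n) (Fin n) ℂ)
      - (A + c • Matrix.vecMulVec v r)).det = B.det * (1 - c * (x - lam0)⁻¹) := by
    rw [key, Matrix.det_add_mul (replicateCol (Fin 1) ((-c) • v)) (replicateRow (Fin 1) r) hBu]
    congr 1
    rw [Matrix.mul_assoc, ← Matrix.replicateCol_mulVec, Matrix.det_fin_one]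
    simp [Matrix.add_apply, Matrix.one_apply, Matrix.replicateRow_mul_replicateCol_apply, Matrix.mulVec_neg,
      Matrix.mulVec_smul, hBinv, smul_smul, dotProduct_neg, dotProduct_smul, hrv]
    ring
  rw [eval_mul, eval_mul, my_eval_charpoly, my_eval_charpoly, hdet]
  simp only [eval_sub, eval_X, eval_C, ← hB]
  have hfact : (1 - c * (x - lam0)⁻¹) * (x - lam0) = x - lam1 := by
    rw [hc]
    field_simp
    ring
  rw [mul_assoc, hfact]
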